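/- With H_{n,i} defined by the Stieltjes tableau H_{0,0}=1, H_{n,i}=0 for i<0 or i>n, H_{n,i} = q^{i-1}H_{n-1,i-1} + q^i H_{n-1,i} + H_{n-1,i+1}, the first column satisfies H_{0,0} = 1 and, for n ≥ 1, H_{n,0} = H_{n-1,0} + Σ_{k=0}^{n-2} q^{1+k-(n-1)δ_{k,n-2}} H_{k,0} H_{n-2-k,0}, where δ is the Kronecker delta; i.e., H_{n,0} equals the q-Motzkin polynomial 𝑀̃_n(q). -/

import Mathlib

open Polynomial

noncomputable section StieltjesAux

/-- Base ring of our power series: polynomials in `q` (spelled `X`). -/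
abbrev PSZ := PowerSeries (Polynomial ℤ)

/-- The constant power series `q`. -/
def qX : PSZ := PowerSeries.C Polynomial.X

/-- Coefficients of the continued-fraction components `φ_s`:
`φ_s = 1 + q^s t φ_s (1 + t φ_{s+1})`. -/
def pp : ℕ → ℕ → Polynomial ℤ
  | _, 0 => 1
  | s, n + 1 => Polynomial.X ^ s *
      ∑ k ∈ (Finset.range (n + 1)).attach,
        pp s k.1 * (if k.1 = n then 1 else pp (s + 1) (n - k.1 - 1))
  termination_by s n => n
  decreasing_by
  · exact Finset.mem_range.mp k.2
  · omega

/-- The power series `φ_s`. -/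
def uu (s : ℕ) : PSZ := PowerSeries.mk (pp s)

/-- The dilated series `φ_s(qt)`. -/
def kap (s : ℕ) : PSZ := PowerSeries.rescale Polynomial.X (uu s)

/-- The "miracle defect" `m_s := φ_{s+1}(1+tφ_{s+2}) - φ_s(qt)(1+tφ_{s+1})`. -/
def mm (s : ℕ) : PSZ :=
  uu (s + 1) * (1 + PowerSeries.X * uu (s + 2)) - kap s * (1 + PowerSeries.X * uu (s + 1))

theorem coeff_uu (s n : ℕ) : (PowerSeries.coeff n) (uu s) = pp s n :=
  PowerSeries.coeff_mk _ _

theorem uu_eq (s : ℕ) :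
    uu s = 1 + qX ^ s * (PowerSeries.X * (uu s * (1 + PowerSeries.X * uu (s + 1)))) := by
  refine PowerSeries.ext fun n => ?_
  rcases n with _ | n
  · simp [uu, pp, qX, PowerSeries.coeff_C_mul]
  · rw [map_add, PowerSeries.coeff_one, if_neg (Nat.succ_ne_zero n), zero_add,
      qX, ← map_pow, PowerSeries.coeff_C_mul, PowerSeries.coeff_succ_X_mul,
      PowerSeries.coeff_mul, Finset.Nat.sum_antidiagonal_eq_sum_range_succ_mk,
      coeff_uu]
    rw [pp]
    rw [Finset.sum_attach (Finset.range (n + 1))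
      (fun k => pp s k * (if k = n then 1 else pp (s + 1) (n - k - 1)))]
    congr 1
    refine Finset.sum_congr rfl fun k hk => ?_
    have hk' : k ≤ n := by simpa [Nat.lt_succ_iff] using Finset.mem_range.mp hk
    rw [coeff_uu]
    congr 1
    rcases Nat.eq_or_lt_of_le hk' with h | h
    · subst h
      simp
    · have h1 : ¬ (k = n) := by omega
      have h2 : n - k ≠ 0 := by omega
      obtain ⟨m, hm⟩ : ∃ m, n - k = m + 1 := ⟨n - k - 1, by omega⟩
      have h3 : n - k - 1 = m := by omega
      rw [if_neg h1, h3, hm, map_add, PowerSeries.coeff_one, if_neg (Nat.succ_ne_zero m),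
        zero_add, PowerSeries.coeff_succ_X_mul, coeff_uu]

theorem rescale_CC (b : Polynomial ℤ) :
    PowerSeries.rescale Polynomial.X (PowerSeries.C b)
      = PowerSeries.C b := by
  refine PowerSeries.ext fun n => ?_
  rw [PowerSeries.coeff_rescale, PowerSeries.coeff_C]
  split <;> simp_all

theorem rescale_XX :
    PowerSeries.rescale Polynomial.X (PowerSeries.X : PSZ) = qX * PowerSeries.X := by
  refine PowerSeries.ext fun n => ?_
  rw [PowerSeries.coeff_rescale, PowerSeries.coeff_X, qX, PowerSeries.coeff_C_mul,
    PowerSeries.coeff_X]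
  split <;> simp_all

theorem kap_eq (s : ℕ) :
    kap s = 1 + qX ^ s * (qX * PowerSeries.X *
      (kap s * (1 + qX * PowerSeries.X * kap (s + 1)))) := by
  have hq : PowerSeries.rescale Polynomial.X qX = qX := by
    rw [qX, rescale_CC]
  have h := congrArg (PowerSeries.rescale (Polynomial.X : Polynomial ℤ)) (uu_eq s)
  rw [map_add, map_one, map_mul, map_pow, map_mul, map_mul, map_add, map_one, map_mul,
    hq, rescale_XX] at h
  rw [show PowerSeries.rescale Polynomial.X (uu s) = kap s from rfl,
    show PowerSeries.rescale Polynomial.X (uu (s + 1)) = kap (s + 1) from rfl] at h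
  calc kap s = _ := h
    _ = _ := by ring

/-- The key algebraic step: the miracle defect contracts. -/
theorem mm_rec (s : ℕ) :
    mm s = qX ^ (s + 1) * (PowerSeries.X * (1 + qX * PowerSeries.X * kap (s + 1))) * mm s
      + qX ^ (s + 2) * (PowerSeries.X ^ 2 * uu (s + 1)) * mm (s + 1) := by
  have h0 := uu_eq (s + 1)
  have h1 := uu_eq (s + 2)
  have g0 := kap_eq s
  simp only [mm]
  linear_combination h0 + PowerSeries.X * uu (s + 1) * h1
    - (1 + PowerSeries.X * uu (s + 1)) * g0

theorem coeff_mul_zero_of_constant (n : ℕ) (g h : PSZ)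
    (hg : PowerSeries.constantCoeff g = 0)
    (hh : ∀ b, b < n → PowerSeries.coeff b h = 0) :
    PowerSeries.coeff n (g * h) = 0 := by
  rw [PowerSeries.coeff_mul]
  refine Finset.sum_eq_zero ?_
  rintro ⟨a, b⟩ hab
  rw [Finset.HasAntidiagonal.mem_antidiagonal] at hab
  rcases Nat.lt_or_ge b n with hb | hb
  · rw [hh b hb, mul_zero]
  · have hbn : b = n := by omega
    have ha : a = 0 := by omega
    subst hbn; subst ha
    rw [PowerSeries.coeff_zero_eq_constantCoeff_apply, hg, zero_mul]

theorem coeff_mul_zero_of_le (n : ℕ) (g h : PSZ)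
    (hh : ∀ b, b ≤ n → PowerSeries.coeff b h = 0) :
    PowerSeries.coeff n (g * h) = 0 := by
  rw [PowerSeries.coeff_mul]
  refine Finset.sum_eq_zero ?_
  rintro ⟨a, b⟩ hab
  rw [Finset.HasAntidiagonal.mem_antidiagonal] at hab
  rw [hh b (by omega), mul_zero]

/-- The miracle: `φ_s(qt)(1+tφ_{s+1}) = φ_{s+1}(1+tφ_{s+2})`. -/
theorem mm_zero (s : ℕ) : mm s = 0 := by
  have main : ∀ n, ∀ s, PowerSeries.coeff n (mm s) = 0 := by
    intro n
    induction n using Nat.strong_induction_on with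
    | _ n ih =>
      intro s
      rw [mm_rec s, map_add]
      rw [coeff_mul_zero_of_constant n _ _ (by simp) (fun b hb => ih b hb s),
        coeff_mul_zero_of_constant n _ _ (by simp) (fun b hb => ih b hb (s + 1)), add_zero]
  refine PowerSeries.ext fun n => ?_
  rw [main n s, map_zero]

theorem prod01 : uu 0 * uu 1 = uu 0 + qX * (kap 0 * (uu 0 - 1)) := by
  have h0 := uu_eq 0
  have h1 := uu_eq 1
  have hm := mm_zero 0
  simp only [mm] at hm
  norm_num at hm
  linear_combination uu 0 * h1 + qX * PowerSeries.X * uu 0 * hm - qX * kap 0 * h0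

/-- Coefficient form of the convolution identity. -/
theorem key_coeff (r : ℕ) :
    (PowerSeries.coeff r) (uu 1 * uu 0)
      = pp 0 r + ∑ k ∈ Finset.range r,
          Polynomial.X ^ (1 + k) * (pp 0 k * pp 0 (r - k)) := by
  rw [mul_comm, prod01, map_add, coeff_uu, qX, PowerSeries.coeff_C_mul]
  congr 1
  rw [PowerSeries.coeff_mul, Finset.Nat.sum_antidiagonal_eq_sum_range_succ_mk,
    Finset.sum_range_succ]
  have hlast : (PowerSeries.coeff r) (kap 0) * (PowerSeries.coeff (r - r)) (uu 0 - 1) = 0 := by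
    rw [Nat.sub_self, map_sub, PowerSeries.coeff_zero_eq_constantCoeff_apply,
      PowerSeries.coeff_zero_eq_constantCoeff_apply]
    have : PowerSeries.constantCoeff (uu 0) = 1 := by
      rw [← PowerSeries.coeff_zero_eq_constantCoeff_apply, coeff_uu]; simp [pp]
    rw [this, map_one, sub_self, mul_zero]
  rw [hlast, add_zero, Finset.mul_sum]
  refine Finset.sum_congr rfl fun k hk => ?_
  have hk' : k < r := Finset.mem_range.mp hk
  have h2 : r - k ≠ 0 := by omega
  rw [kap, PowerSeries.coeff_rescale, coeff_uu, map_sub, coeff_uu,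
    PowerSeries.coeff_one, if_neg h2, sub_zero]
  ring

end StieltjesAux

/-- The first column of the Stieltjes tableau `H` (with `α_i = β_i = q^(i-1)`) satisfies
`H 0 0 = 1` and, for `n ≥ 1`,
`H n 0 = H (n-1) 0 + ∑_{k=0}^{n-2} q^(1+k-(n-1)·δ_{k,n-2}) · H k 0 · H (n-2-k) 0`;
hence `H n 0` equals the q-Motzkin polynomial `M̃ n`. -/
theorem stieltjes_first_column_eq_qMotzkin (H : ℕ → ℕ → Polynomial ℤ)
    (h00 : H 0 0 = 1)
    (hhigh : ∀ n i, n < i → H n i = 0)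
    (hrec : ∀ n i, 1 ≤ n → 1 ≤ i → i ≤ n →
      H n i = X ^ (i - 1) * H (n - 1) (i - 1) + X ^ i * H (n - 1) i + H (n - 1) (i + 1))
    (hrec0 : ∀ n, 1 ≤ n → H n 0 = H (n - 1) 0 + H (n - 1) 1)
    (Mt : ℕ → Polynomial ℤ) (ht0 : Mt 0 = 1)
    (htrec : ∀ n, 1 ≤ n →
      Mt n = Mt (n - 1) +
        ∑ k ∈ Finset.range (n - 1),
          X ^ (k + 1 - (n - 1) * (if k = n - 2 then 1 else 0)) * Mt k * Mt (n - 2 - k)) :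
    (∀ n, 1 ≤ n →
      H n 0 = H (n - 1) 0 +
        ∑ k ∈ Finset.range (n - 1),
          X ^ (1 + k - (n - 1) * (if k = n - 2 then 1 else 0)) * H k 0 * H (n - 2 - k) 0) ∧
      ∀ n, H n 0 = Mt n := by
  classical
  -- the column generating functions
  set HH : ℕ → PSZ := fun i => PowerSeries.mk (fun n => H n i) with hHH
  have coeffHH : ∀ i n, (PowerSeries.coeff n) (HH i) = H n i := fun i n =>
    PowerSeries.coeff_mk _ _
  -- series form of the 0-column recurrence
  have S0 : HH 0 = 1 + PowerSeries.X * HH 0 + PowerSeries.X * HH 1 := by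
    refine PowerSeries.ext fun n => ?_
    rcases n with _ | n
    · simp [coeffHH, h00]
    · rw [coeffHH, map_add, map_add, PowerSeries.coeff_one, if_neg (Nat.succ_ne_zero n),
        zero_add, PowerSeries.coeff_succ_X_mul, PowerSeries.coeff_succ_X_mul,
        coeffHH, coeffHH]
      have := hrec0 (n + 1) (by omega)
      simpa using this
  -- series form of the higher-column recurrences
  have Sj : ∀ j : ℕ, HH (j + 1) = qX ^ j * (PowerSeries.X * HH j)
      + qX ^ (j + 1) * (PowerSeries.X * HH (j + 1)) + PowerSeries.X * HH (j + 2) := by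
    intro j
    refine PowerSeries.ext fun n => ?_
    rw [map_add, map_add, qX, ← map_pow, ← map_pow, PowerSeries.coeff_C_mul,
      PowerSeries.coeff_C_mul]
    rcases n with _ | n
    · rw [coeffHH, hhigh 0 (j + 1) (by omega)]
      simp
    · rw [PowerSeries.coeff_succ_X_mul, PowerSeries.coeff_succ_X_mul,
        PowerSeries.coeff_succ_X_mul, coeffHH, coeffHH, coeffHH, coeffHH]
      rcases Nat.lt_or_ge n j with hn | hn
      · rw [hhigh (n + 1) (j + 1) (by omega), hhigh n j (by omega),
          hhigh n (j + 1) (by omega), hhigh n (j + 2) (by omega)]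
        ring
      · have := hrec (n + 1) (j + 1) (by omega) (by omega) (by omega)
        simpa using this
  -- the column contraction invariant
  have Wrec : ∀ j : ℕ,
      HH (j + 1) - qX ^ j * (PowerSeries.X * (uu (j + 1) * HH j))
        = PowerSeries.X * ((qX ^ (j + 1) * (1 + PowerSeries.X * uu (j + 2))) *
            (HH (j + 1) - qX ^ j * (PowerSeries.X * (uu (j + 1) * HH j)))
          + (HH (j + 2) - qX ^ (j + 1) * (PowerSeries.X * (uu (j + 2) * HH (j + 1))))) := by
    intro j
    linear_combination (Sj j) - qX ^ j * PowerSeries.X * HH j * (uu_eq (j + 1))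
  have Wzero : ∀ j : ℕ, HH (j + 1) = qX ^ j * (PowerSeries.X * (uu (j + 1) * HH j)) := by
    have main : ∀ n, ∀ j, PowerSeries.coeff n
        (HH (j + 1) - qX ^ j * (PowerSeries.X * (uu (j + 1) * HH j))) = 0 := by
      intro n
      induction n using Nat.strong_induction_on with
      | _ n ih =>
        intro j
        rw [Wrec j]
        rcases n with _ | n
        · exact PowerSeries.coeff_zero_X_mul _
        · rw [PowerSeries.coeff_succ_X_mul, map_add,
            coeff_mul_zero_of_le n _ _ (fun b hb => ih b (by omega) j),
            ih n (by omega) (j + 1), add_zero]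
    intro j
    have : HH (j + 1) - qX ^ j * (PowerSeries.X * (uu (j + 1) * HH j)) = 0 := by
      refine PowerSeries.ext fun n => ?_; rw [main n j, map_zero]
    exact sub_eq_zero.mp this
  -- HH 1 in terms of uu
  have h1W : HH 1 = PowerSeries.X * (uu 1 * HH 0) := by
    have h := Wzero 0
    rw [pow_zero, one_mul] at h
    exact h
  have Drec : HH 0 - uu 0 = PowerSeries.X * ((1 + PowerSeries.X * uu 1) * (HH 0 - uu 0)) := by
    linear_combination S0 - uu_eq 0 + PowerSeries.X * h1W
  have HH0 : HH 0 = uu 0 := by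
    have main : ∀ n, (PowerSeries.coeff n) (HH 0 - uu 0) = 0 := by
      intro n
      induction n using Nat.strong_induction_on with
      | _ n ih =>
        rw [Drec]
        rcases n with _ | n
        · exact PowerSeries.coeff_zero_X_mul _
        · rw [PowerSeries.coeff_succ_X_mul]
          exact coeff_mul_zero_of_le n _ _ (fun b hb => ih b (by omega))
    refine sub_eq_zero.mp ?_
    refine PowerSeries.ext fun n => ?_
    rw [main n, map_zero]
  have Hn0 : ∀ n, H n 0 = pp 0 n := by
    intro n
    have h := congrArg (PowerSeries.coeff n) HH0
    rwa [coeffHH, coeff_uu] at h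
  have key : ∀ r : ℕ, H (r + 1) 1 = pp 0 r + ∑ k ∈ Finset.range r,
      Polynomial.X ^ (1 + k) * (pp 0 k * pp 0 (r - k)) := by
    intro r
    have h2 : HH 1 = PowerSeries.X * (uu 1 * uu 0) := by rw [h1W, HH0]
    have h := congrArg (PowerSeries.coeff (r + 1)) h2
    rwa [coeffHH, PowerSeries.coeff_succ_X_mul, key_coeff] at h
  have part1 : ∀ n, 1 ≤ n →
      H n 0 = H (n - 1) 0 +
        ∑ k ∈ Finset.range (n - 1),
          X ^ (1 + k - (n - 1) * (if k = n - 2 then 1 else 0)) * H k 0 * H (n - 2 - k) 0 := by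
    intro n hn
    obtain ⟨m, rfl⟩ : ∃ m, n = m + 1 := ⟨n - 1, by omega⟩
    rw [hrec0 (m + 1) (by omega)]
    simp only [Nat.add_sub_cancel]
    congr 1
    rcases m with _ | r
    · rw [hhigh 0 1 (by omega)]
      simp
    · -- goal : H (r+1) 1 = ∑ k ∈ range (r+1), X^(1+k-(r+1)*ite (k = r+1+1-2) 1 0) * H k 0 * H (r+1+1-2-k) 0
      have e2 : r + 1 + 1 - 2 = r := by omega
      rw [key r, Finset.sum_range_succ, e2, if_pos rfl]
      have e3 : 1 + r - (r + 1) * 1 = 0 := by omega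
      rw [e3, pow_zero, one_mul, Nat.sub_self, h00, mul_one, Hn0 r, add_comm]
      congr 1
      refine Finset.sum_congr rfl fun k hk => ?_
      have hk' : k < r := Finset.mem_range.mp hk
      rw [if_neg (by omega : ¬ k = r), Nat.mul_zero, Nat.sub_zero,
        Hn0 k, Hn0 (r - k), mul_assoc]
  have part2 : ∀ n, H n 0 = Mt n := by
    intro n
    induction n using Nat.strong_induction_on with
    | _ n ih =>
      rcases n with _ | m
      · rw [h00, ht0]
      · rw [part1 (m + 1) (by omega), htrec (m + 1) (by omega)]
        simp only [Nat.add_sub_cancel]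
        congr 1
        · exact ih m (by omega)
        · refine Finset.sum_congr rfl fun k hk => ?_
          have hk' : k < m := Finset.mem_range.mp hk
          rw [ih k (by omega), ih (m + 1 - 2 - k) (by omega), Nat.add_comm 1 k]
  exact ⟨part1, part2⟩
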